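/- arXiv:0810.2750 — 3 statements merged into one kernel-verified Lean document; each statement's English description precedes it below -/
import Mathlib

section
/- Let $w^* : (0, x_0) \to (0,\infty)$ be a nondecreasing function with generalized inverse (distribution function) $D_w$, i.e., $D_w(y) = |\{x \in (0,x_0) : w^*(x) < y\}|$. Then $\int_0^\varepsilon x^{-2} w^*(x)\, dx = \infty$ for some (equivalently, all) $\varepsilon \in (0,x_0)$ if and only if $\int_0^\delta \frac{dy}{D_w(y)} = \infty$ for some (equivalently, all) sufficiently small $\delta > 0$. -/
open MeasureTheory
open scoped ENNReal NNReal

lemma aux_Jcalc (a b : ℝ) (ha : 0 < a) (hab : a ≤ b) :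
    ∫⁻ x in Set.Ioo a b, ENNReal.ofReal (1 / x ^ 2) = ENNReal.ofReal (1 / a - 1 / b) := by
  have hcont : ContinuousOn (fun x : ℝ => 1 / x ^ 2) (Set.Icc a b) := by
    apply ContinuousOn.div continuousOn_const (continuousOn_pow 2)
    intro x hx
    exact pow_ne_zero 2 (ne_of_gt (lt_of_lt_of_le ha hx.1))
  have hint : IntegrableOn (fun x : ℝ => 1 / x ^ 2) (Set.Ioo a b) :=
    (hcont.integrableOn_compact isCompact_Icc).mono_set Set.Ioo_subset_Icc_self
  rw [← ofReal_integral_eq_lintegral_ofReal hint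
      (Filter.Eventually.of_forall fun x => by positivity)]
  congr 1
  have h1 : ∫ x in Set.Ioo a b, 1 / x ^ 2 = ∫ x in a..b, 1 / x ^ 2 := by
    rw [intervalIntegral.integral_of_le hab, integral_Ioc_eq_integral_Ioo]
  rw [h1]
  have h2 : ∀ x : ℝ, (1 : ℝ) / x ^ 2 = x ^ (-2 : ℤ) := by
    intro x
    rw [zpow_neg, one_div]
    norm_num [zpow_ofNat]
  simp_rw [h2]
  rw [integral_zpow (Or.inr ⟨by norm_num, by
    intro h
    rcases Set.mem_uIcc.1 h with ⟨h1, _⟩ | ⟨_, h2⟩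
    · linarith
    · linarith⟩)]
  norm_num
  ring

lemma aux_Jzero (b : ℝ) (hb : 0 < b) :
    ∫⁻ x in Set.Ioo 0 b, ENNReal.ofReal (1 / x ^ 2) = ⊤ := by
  apply ENNReal.eq_top_of_forall_nnreal_le
  intro r
  set a : ℝ := ((r : ℝ) + 1 / b)⁻¹ with hadef
  have hbinv : 0 < 1 / b := by positivity
  have ha : 0 < a := by positivity
  have hab : a ≤ b := by
    rw [hadef]
    rw [inv_le_comm₀ (by positivity) hb]
    calc b⁻¹ = 1 / b := (one_div b).symm
    _ ≤ (r : ℝ) + 1 / b := le_add_of_nonneg_left r.coe_nonneg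
  have h1 : (1 : ℝ) / a - 1 / b = (r : ℝ) := by
    rw [hadef, one_div, inv_inv]
    ring
  calc (r : ℝ≥0∞) = ENNReal.ofReal ((1 : ℝ) / a - 1 / b) := by
        rw [h1]; exact ENNReal.ofReal_coe_nnreal.symm
    _ = ∫⁻ x in Set.Ioo a b, ENNReal.ofReal (1 / x ^ 2) := (aux_Jcalc a b ha hab).symm
    _ ≤ ∫⁻ x in Set.Ioo 0 b, ENNReal.ofReal (1 / x ^ 2) :=
        lintegral_mono_set (Set.Ioo_subset_Ioo (le_of_lt ha) le_rfl)

lemma aux_squeeze {c : ℝ} {S : Set ℝ} (h1 : Set.Ioo 0 c ⊆ S) (h2 : S ⊆ Set.Ioc 0 c) :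
    MeasurableSet S ∧ volume S = ENNReal.ofReal c := by
  have hsub : S \ Set.Ioo 0 c ⊆ {c} := by
    intro x hx
    have hx1 := h2 hx.1
    have hx2 := hx.2
    simp only [Set.mem_Ioc] at hx1
    simp only [Set.mem_Ioo, not_and] at hx2
    have : ¬ x < c := fun h => hx2 hx1.1 h
    exact Set.mem_singleton_iff.2 (le_antisymm hx1.2 (not_lt.1 this))
  have hdecomp : S = Set.Ioo 0 c ∪ (S \ Set.Ioo 0 c) := by
    ext x
    constructor
    · intro hx
      by_cases h : x ∈ Set.Ioo 0 c
      · exact Or.inl h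
      · exact Or.inr ⟨hx, h⟩
    · rintro (h | h)
      · exact h1 h
      · exact h.1
  constructor
  · rw [hdecomp]
    exact measurableSet_Ioo.union ((Set.subsingleton_singleton.anti hsub).measurableSet)
  · apply le_antisymm
    · calc volume S ≤ volume (Set.Ioc 0 c) := measure_mono h2
        _ = ENNReal.ofReal c := by rw [Real.volume_Ioc, sub_zero]
    · calc ENNReal.ofReal c = volume (Set.Ioo 0 c) := by rw [Real.volume_Ioo, sub_zero]
        _ ≤ volume S := measure_mono h1

lemma aux_S (x₀ : ℝ) (w : ℝ → ℝ) (hmono : MonotoneOn w (Set.Ioo 0 x₀)) (t : ℝ) :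
    ∃ c : ℝ, 0 ≤ c ∧ c ≤ max x₀ 0 ∧ Set.Ioo 0 c ⊆ {x ∈ Set.Ioo 0 x₀ | w x < t} ∧
      {x ∈ Set.Ioo 0 x₀ | w x < t} ⊆ Set.Ioc 0 c := by
  set S := {x ∈ Set.Ioo 0 x₀ | w x < t} with hS
  have hbdd : BddAbove (insert 0 S) := by
    refine ⟨max x₀ 0, ?_⟩
    rintro z (rfl | hz)
    · exact le_max_right _ _
    · exact le_trans (le_of_lt hz.1.2) (le_max_left _ _)
  have hne : (insert (0:ℝ) S).Nonempty := ⟨0, Set.mem_insert _ _⟩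
  refine ⟨sSup (insert 0 S), le_csSup hbdd (Set.mem_insert _ _), ?_, ?_, ?_⟩
  · apply csSup_le hne
    rintro z (rfl | hz)
    · exact le_max_right _ _
    · exact le_trans (le_of_lt hz.1.2) (le_max_left _ _)
  · intro x hx
    obtain ⟨s, hs, hxs⟩ := exists_lt_of_lt_csSup hne hx.2
    rcases hs with rfl | hs
    · exact absurd hx.1 (not_lt.2 (le_of_lt hxs))
    · refine ⟨⟨hx.1, lt_trans hxs hs.1.2⟩, ?_⟩
      exact lt_of_le_of_lt (hmono ⟨hx.1, lt_trans hxs hs.1.2⟩ hs.1 (le_of_lt hxs)) hs.2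
  · intro x hx
    exact ⟨hx.1.1, le_csSup hbdd (Set.mem_insert_of_mem _ hx)⟩

lemma aux_W (x₀ : ℝ) (w : ℝ → ℝ) (hmono : MonotoneOn w (Set.Ioo 0 x₀)) :
    ∃ W : ℝ → ℝ, Measurable W ∧ ∀ x ∈ Set.Ioo 0 x₀, W x = w x := by
  refine ⟨fun x => if x ∈ Set.Ioo 0 x₀ then w x else 0, ?_, fun x hx => if_pos hx⟩
  apply measurable_of_Iio
  intro t
  have hset : (fun x => if x ∈ Set.Ioo 0 x₀ then w x else 0) ⁻¹' Set.Iio t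
      = {x ∈ Set.Ioo 0 x₀ | w x < t} ∪ (if (0:ℝ) < t then (Set.Ioo 0 x₀)ᶜ else ∅) := by
    ext x
    simp only [Set.mem_preimage, Set.mem_Iio, Set.mem_union, Set.mem_setOf_eq]
    constructor
    · intro hlt
      by_cases hx : x ∈ Set.Ioo 0 x₀
      · rw [if_pos hx] at hlt; exact Or.inl ⟨hx, hlt⟩
      · rw [if_neg hx] at hlt
        right; rw [if_pos hlt]; exact hx
    · rintro (⟨hx, hlt⟩ | hmem)
      · rw [if_pos hx]; exact hlt
      · by_cases h0 : (0:ℝ) < t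
        · rw [if_pos h0] at hmem
          rw [if_neg hmem]; exact h0
        · rw [if_neg h0] at hmem; exact absurd hmem (Set.notMem_empty x)
  rw [hset]
  obtain ⟨c, _, _, h1, h2⟩ := aux_S x₀ w hmono t
  refine MeasurableSet.union (aux_squeeze h1 h2).1 ?_
  split_ifs
  · exact measurableSet_Ioo.compl
  · exact MeasurableSet.empty

lemma aux_split (g : ℝ → ℝ≥0∞) (b c : ℝ) :
    ∫⁻ x in Set.Ioo 0 c, g x ≤ (∫⁻ x in Set.Ioo 0 b, g x) + ∫⁻ x in Set.Ico b c, g x := by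
  refine le_trans (lintegral_mono_set ?_) (lintegral_union_le _ _ _)
  intro x hx
  rcases lt_or_ge x b with h | h
  · exact Or.inl ⟨hx.1, h⟩
  · exact Or.inr ⟨h, hx.2⟩

lemma aux_top_of_le_add {A T total : ℝ≥0∞} (h : total = ⊤) (hle : total ≤ A + T)
    (hT : T ≠ ⊤) : A = ⊤ := by
  by_contra hA
  exact (ENNReal.add_ne_top.2 ⟨hA, hT⟩) (top_le_iff.1 (h ▸ hle))

lemma aux_tail (a b C : ℝ) (ha : 0 < a) (hC : 0 ≤ C) (f : ℝ → ℝ)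
    (hf : ∀ x ∈ Set.Ico a b, f x ≤ C) :
    ∫⁻ x in Set.Ico a b, ENNReal.ofReal (f x / x ^ 2) ≠ ⊤ := by
  have hle : ∫⁻ x in Set.Ico a b, ENNReal.ofReal (f x / x ^ 2)
      ≤ ENNReal.ofReal (C / a ^ 2) * volume (Set.Ico a b) := by
    rw [← setLIntegral_const]
    apply setLIntegral_mono' measurableSet_Ico
    intro x hx
    apply ENNReal.ofReal_le_ofReal
    rcases le_or_gt (f x) 0 with h | h
    · exact le_trans (div_nonpos_iff.2 (Or.inr ⟨h, sq_nonneg x⟩)) (by positivity)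
    · exact div_le_div₀ hC (hf x hx) (by positivity)
        (pow_le_pow_left₀ (le_of_lt ha) hx.1 2)
  intro htop
  rw [htop] at hle
  have : ENNReal.ofReal (C / a ^ 2) * volume (Set.Ico a b) < ⊤ :=
    ENNReal.mul_lt_top ENNReal.ofReal_lt_top (by rw [Real.volume_Ico]; exact ENNReal.ofReal_lt_top)
  exact absurd (top_le_iff.1 hle) (ne_of_lt this)

lemma aux_key (x₀ : ℝ) (hx₀ : 0 < x₀) (w : ℝ → ℝ) (hmono : MonotoneOn w (Set.Ioo 0 x₀))
    (hpos : ∀ x ∈ Set.Ioo 0 x₀, 0 < w x) (δ : ℝ) (hδ : 0 < δ) :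
    ∫⁻ y in Set.Ioo 0 δ, (volume {x ∈ Set.Ioo 0 x₀ | w x < y})⁻¹
      = (∫⁻ x in Set.Ioo 0 x₀, ENNReal.ofReal (min (w x) δ / x ^ 2))
        + ENNReal.ofReal δ * (ENNReal.ofReal x₀)⁻¹ := by
  obtain ⟨W, hW, hWeq⟩ := aux_W x₀ w hmono
  set f : ℝ → ℝ → ℝ≥0∞ := fun y x =>
    Set.indicator {x | y ≤ W x} (fun x => ENNReal.ofReal (1 / x ^ 2)) x with hfdef
  have step1 : ∀ y : ℝ, 0 < y →
      (volume {x ∈ Set.Ioo 0 x₀ | w x < y})⁻¹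
        = (∫⁻ x in Set.Ioo 0 x₀, f y x) + (ENNReal.ofReal x₀)⁻¹ := by
    intro y hy
    obtain ⟨c, hc0, hcx', hIoo, hIoc⟩ := aux_S x₀ w hmono y
    have hcx : c ≤ x₀ := by rwa [max_eq_left hx₀.le] at hcx'
    obtain ⟨hmeasS, hvol⟩ := aux_squeeze hIoo hIoc
    have hTmeas : MeasurableSet {x | y ≤ W x} := measurableSet_le measurable_const hW
    have e1 : ∫⁻ x in Set.Ioo 0 x₀, f y x
        = ∫⁻ x in {x | y ≤ W x} ∩ Set.Ioo 0 x₀, ENNReal.ofReal (1 / x ^ 2) := by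
      rw [hfdef, lintegral_indicator hTmeas, Measure.restrict_restrict hTmeas]
    have e2 : ({x | y ≤ W x} ∩ Set.Ioo 0 x₀ : Set ℝ) =ᵐ[volume] Set.Ioo c x₀ := by
      rw [MeasureTheory.ae_eq_set]
      constructor
      · refine measure_mono_null ?_ (measure_singleton c)
        rintro x ⟨⟨hyW, hxI⟩, hnot⟩
        have hww : y ≤ w x := by
          have h' : y ≤ W x := hyW
          rwa [hWeq x hxI] at h'
        have hxS : x ∉ {x ∈ Set.Ioo 0 x₀ | w x < y} := fun hS => absurd hS.2 (not_lt.2 hww)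
        have hge : c ≤ x := by
          by_contra hlt
          exact hxS (hIoo ⟨hxI.1, not_le.1 hlt⟩)
        have hle : x ≤ c := by
          by_contra hgt
          exact hnot ⟨not_le.1 hgt, hxI.2⟩
        exact Set.mem_singleton_iff.2 (le_antisymm hle hge)
      · have hsub : Set.Ioo c x₀ ⊆ ({x | y ≤ W x} : Set ℝ) ∩ Set.Ioo 0 x₀ := by
          intro x hx
          have hxI : x ∈ Set.Ioo 0 x₀ := ⟨lt_of_le_of_lt hc0 hx.1, hx.2⟩
          refine ⟨?_, hxI⟩
          have hxS : x ∉ {x ∈ Set.Ioo 0 x₀ | w x < y} := by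
            intro hS
            exact absurd (hIoc hS).2 (not_le.2 hx.1)
          have : ¬ w x < y := fun h => hxS ⟨hxI, h⟩
          show y ≤ W x
          rw [hWeq x hxI]
          exact not_lt.1 this
        rw [Set.diff_eq_empty.2 hsub]
        exact measure_empty
    rw [e1, setLIntegral_congr e2]
    rcases eq_or_lt_of_le hc0 with hc | hc
    · rw [← hc] at hvol ⊢
      rw [hvol]
      simp only [ENNReal.ofReal_zero, ENNReal.inv_zero]
      rw [aux_Jzero x₀ hx₀]
      simp
    · rw [aux_Jcalc c x₀ hc hcx, hvol]
      have hsub : (0:ℝ) ≤ 1 / c - 1 / x₀ :=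
        sub_nonneg.2 (one_div_le_one_div_of_le hc hcx)
      rw [← ENNReal.ofReal_inv_of_pos hc, ← ENNReal.ofReal_inv_of_pos hx₀,
        ← ENNReal.ofReal_add hsub (by positivity)]
      congr 1
      rw [one_div, one_div]
      ring
  have hker : Measurable fun p : ℝ × ℝ => ENNReal.ofReal (1 / p.2 ^ 2) :=
    ENNReal.measurable_ofReal.comp (measurable_const.div (measurable_snd.pow_const 2))
  have hfm : Measurable (Function.uncurry f) := by
    have heq : Function.uncurry f = fun p : ℝ × ℝ =>
        if p.1 ≤ W p.2 then ENNReal.ofReal (1 / p.2 ^ 2) else 0 := by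
      funext p
      rcases p with ⟨y, x⟩
      simp [Function.uncurry, hfdef, Set.indicator_apply]
    rw [heq]
    exact Measurable.ite (measurableSet_le measurable_fst (hW.comp measurable_snd))
      hker measurable_const
  have hswap : ∫⁻ y in Set.Ioo 0 δ, ∫⁻ x in Set.Ioo 0 x₀, f y x
      = ∫⁻ x in Set.Ioo 0 x₀, ∫⁻ y in Set.Ioo 0 δ, f y x :=
    lintegral_lintegral_swap hfm.aemeasurable
  have inner : ∀ x ∈ Set.Ioo 0 x₀, ∫⁻ y in Set.Ioo 0 δ, f y x
      = ENNReal.ofReal (min (w x) δ / x ^ 2) := by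
    intro x hx
    have hrw : (fun y => f y x)
        = Set.indicator (Set.Iic (W x)) (fun _ => ENNReal.ofReal (1 / x ^ 2)) := by
      funext y
      simp [hfdef, Set.indicator_apply, Set.mem_Iic, Set.mem_setOf_eq]
    calc ∫⁻ y in Set.Ioo 0 δ, f y x
        = ∫⁻ y in Set.Ioo 0 δ,
            Set.indicator (Set.Iic (W x)) (fun _ => ENNReal.ofReal (1 / x ^ 2)) y :=
          lintegral_congr fun y => congrFun hrw y
      _ = ∫⁻ _ in Set.Iic (W x) ∩ Set.Ioo 0 δ, ENNReal.ofReal (1 / x ^ 2) := by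
          rw [lintegral_indicator measurableSet_Iic,
            Measure.restrict_restrict measurableSet_Iic]
      _ = ENNReal.ofReal (1 / x ^ 2) * volume (Set.Iic (W x) ∩ Set.Ioo 0 δ) :=
          setLIntegral_const _ _
      _ = ENNReal.ofReal (min (w x) δ / x ^ 2) := by
          rw [hWeq x hx]
          rcases lt_or_ge (w x) δ with h | h
          · have hset : Set.Iic (w x) ∩ Set.Ioo 0 δ = Set.Ioc 0 (w x) := by
              ext z
              simp only [Set.mem_inter_iff, Set.mem_Iic, Set.mem_Ioo, Set.mem_Ioc]
              constructor
              · rintro ⟨h1, h2, h3⟩; exact ⟨h2, h1⟩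
              · rintro ⟨h1, h2⟩; exact ⟨h2, h1, lt_of_le_of_lt h2 h⟩
            rw [hset, Real.volume_Ioc, sub_zero, min_eq_left (le_of_lt h),
              ← ENNReal.ofReal_mul (by positivity : (0:ℝ) ≤ 1 / x ^ 2)]
            congr 1
            ring
          · have hset : Set.Iic (w x) ∩ Set.Ioo 0 δ = Set.Ioo 0 δ := by
              ext z
              simp only [Set.mem_inter_iff, Set.mem_Iic, Set.mem_Ioo]
              constructor
              · rintro ⟨h1, h2⟩; exact h2
              · rintro ⟨h1, h2⟩; exact ⟨le_trans (le_of_lt h2) h, h1, h2⟩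
            rw [hset, Real.volume_Ioo, sub_zero, min_eq_right h,
              ← ENNReal.ofReal_mul (by positivity : (0:ℝ) ≤ 1 / x ^ 2)]
            congr 1
            ring
  calc ∫⁻ y in Set.Ioo 0 δ, (volume {x ∈ Set.Ioo 0 x₀ | w x < y})⁻¹
      = ∫⁻ y in Set.Ioo 0 δ, ((∫⁻ x in Set.Ioo 0 x₀, f y x) + (ENNReal.ofReal x₀)⁻¹) :=
        setLIntegral_congr_fun measurableSet_Ioo
          (fun y hy => step1 y hy.1)
    _ = (∫⁻ y in Set.Ioo 0 δ, ∫⁻ x in Set.Ioo 0 x₀, f y x)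
          + (ENNReal.ofReal x₀)⁻¹ * volume (Set.Ioo 0 δ) := by
        rw [lintegral_add_right _ measurable_const, setLIntegral_const]
    _ = (∫⁻ x in Set.Ioo 0 x₀, ∫⁻ y in Set.Ioo 0 δ, f y x)
          + ENNReal.ofReal δ * (ENNReal.ofReal x₀)⁻¹ := by
        rw [hswap, Real.volume_Ioo, sub_zero, mul_comm]
    _ = (∫⁻ x in Set.Ioo 0 x₀, ENNReal.ofReal (min (w x) δ / x ^ 2))
          + ENNReal.ofReal δ * (ENNReal.ofReal x₀)⁻¹ := by
        rw [setLIntegral_congr_fun measurableSet_Ioo inner]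

lemma aux_M_indep (x₀ : ℝ) (w : ℝ → ℝ) (hnn : ∀ x ∈ Set.Ioo 0 x₀, 0 ≤ w x)
    (δ₁ δ₂ : ℝ) (h1 : 0 < δ₁) (h2 : 0 < δ₂)
    (htop : ∫⁻ x in Set.Ioo 0 x₀, ENNReal.ofReal (min (w x) δ₁ / x ^ 2) = ⊤) :
    ∫⁻ x in Set.Ioo 0 x₀, ENNReal.ofReal (min (w x) δ₂ / x ^ 2) = ⊤ := by
  set C : ℝ := (δ₁ + δ₂) / δ₂ with hC
  have hC1 : 1 ≤ C := by
    rw [hC, le_div_iff₀ h2]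
    linarith
  have hCpos : (0:ℝ) ≤ C := by linarith
  have hle : (∫⁻ x in Set.Ioo 0 x₀, ENNReal.ofReal (min (w x) δ₁ / x ^ 2))
      ≤ ENNReal.ofReal C * ∫⁻ x in Set.Ioo 0 x₀, ENNReal.ofReal (min (w x) δ₂ / x ^ 2) := by
    rw [← lintegral_const_mul' _ _ ENNReal.ofReal_ne_top]
    apply setLIntegral_mono' measurableSet_Ioo
    intro x hx
    rw [← ENNReal.ofReal_mul hCpos]
    apply ENNReal.ofReal_le_ofReal
    have hx1 : (0:ℝ) < x := hx.1
    have hw : 0 ≤ w x := hnn x hx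
    have key : min (w x) δ₁ ≤ C * min (w x) δ₂ := by
      rcases le_total (w x) δ₂ with h | h
      · rw [min_eq_left h]
        calc min (w x) δ₁ ≤ w x := min_le_left _ _
          _ = 1 * w x := (one_mul _).symm
          _ ≤ C * w x := mul_le_mul_of_nonneg_right hC1 hw
      · rw [min_eq_right h]
        have hCd : C * δ₂ = δ₁ + δ₂ := by
          rw [hC]
          field_simp
        calc min (w x) δ₁ ≤ δ₁ := min_le_right _ _
          _ ≤ C * δ₂ := by rw [hCd]; linarith
    calc min (w x) δ₁ / x ^ 2 ≤ C * min (w x) δ₂ / x ^ 2 := by gcongr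
      _ = C * (min (w x) δ₂ / x ^ 2) := mul_div_assoc _ _ _
  rw [htop] at hle
  by_contra hne
  exact absurd (top_le_iff.1 hle) (ENNReal.mul_ne_top ENNReal.ofReal_ne_top hne)

lemma aux_E_forall (x₀ : ℝ) (hx₀ : 0 < x₀) (w : ℝ → ℝ)
    (hmono : MonotoneOn w (Set.Ioo 0 x₀)) (hpos : ∀ x ∈ Set.Ioo 0 x₀, 0 < w x)
    (ε₁ : ℝ) (hε₁ : ε₁ ∈ Set.Ioo 0 x₀)
    (htop : ∫⁻ x in Set.Ioo 0 ε₁, ENNReal.ofReal (w x / x ^ 2) = ⊤) :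
    ∀ ε₂ ∈ Set.Ioo 0 x₀, ∫⁻ x in Set.Ioo 0 ε₂, ENNReal.ofReal (w x / x ^ 2) = ⊤ := by
  intro ε₂ hε₂
  rcases le_or_gt ε₁ ε₂ with h | h
  · have hmo := lintegral_mono_set (μ := volume)
      (f := fun x => ENNReal.ofReal (w x / x ^ 2)) (Set.Ioo_subset_Ioo (le_refl (0:ℝ)) h)
    rw [htop] at hmo
    exact top_le_iff.1 hmo
  · refine aux_top_of_le_add htop (aux_split _ ε₂ ε₁) ?_
    apply aux_tail ε₂ ε₁ (w ε₁) hε₂.1 (hpos ε₁ hε₁).le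
    intro x hx
    exact hmono ⟨lt_of_lt_of_le hε₂.1 hx.1, lt_trans hx.2 hε₁.2⟩ hε₁ (le_of_lt hx.2)

lemma aux_M_to_E (x₀ : ℝ) (w : ℝ → ℝ) (δ ε : ℝ) (hδ : 0 < δ) (hε : ε ∈ Set.Ioo 0 x₀)
    (htop : ∫⁻ x in Set.Ioo 0 x₀, ENNReal.ofReal (min (w x) δ / x ^ 2) = ⊤) :
    ∫⁻ x in Set.Ioo 0 ε, ENNReal.ofReal (w x / x ^ 2) = ⊤ := by
  have hA : ∫⁻ x in Set.Ioo 0 ε, ENNReal.ofReal (min (w x) δ / x ^ 2) = ⊤ :=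
    aux_top_of_le_add htop (aux_split _ ε x₀)
      (aux_tail ε x₀ δ hε.1 hδ.le _ (fun x _ => min_le_right _ _))
  have hmo : (∫⁻ x in Set.Ioo 0 ε, ENNReal.ofReal (min (w x) δ / x ^ 2))
      ≤ ∫⁻ x in Set.Ioo 0 ε, ENNReal.ofReal (w x / x ^ 2) := by
    apply setLIntegral_mono' measurableSet_Ioo
    intro x hx
    apply ENNReal.ofReal_le_ofReal
    have hx1 : (0:ℝ) < x := hx.1
    gcongr
    exact min_le_left _ _
  rw [hA] at hmo
  exact top_le_iff.1 hmo


/-- For a nondecreasing `w* : (0,x₀) → (0,∞)` with distribution function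
`D_w(y) = |{x ∈ (0,x₀) : w*(x) < y}|`, the condition `∫_0^ε x⁻² w*(x) dx = ∞`
(for some, equivalently all, `ε ∈ (0,x₀)`) is equivalent to
`∫_0^δ dy/D_w(y) = ∞` (for some, equivalently all, sufficiently small `δ > 0`). -/
theorem stmt_9 (x₀ : ℝ) (hx₀ : 0 < x₀) (w : ℝ → ℝ)
    (hmono : MonotoneOn w (Set.Ioo 0 x₀)) (hpos : ∀ x ∈ Set.Ioo 0 x₀, 0 < w x) :
    ((∃ ε ∈ Set.Ioo 0 x₀,
        ∫⁻ x in Set.Ioo 0 ε, ENNReal.ofReal (w x / x ^ 2) = ⊤) ↔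
      (∀ ε ∈ Set.Ioo 0 x₀,
        ∫⁻ x in Set.Ioo 0 ε, ENNReal.ofReal (w x / x ^ 2) = ⊤)) ∧
    ((∃ ε ∈ Set.Ioo 0 x₀,
        ∫⁻ x in Set.Ioo 0 ε, ENNReal.ofReal (w x / x ^ 2) = ⊤) ↔
      (∃ δ > 0,
        ∫⁻ y in Set.Ioo 0 δ, (volume {x ∈ Set.Ioo 0 x₀ | w x < y})⁻¹ = ⊤)) ∧
    ((∃ δ > 0,
        ∫⁻ y in Set.Ioo 0 δ, (volume {x ∈ Set.Ioo 0 x₀ | w x < y})⁻¹ = ⊤) ↔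
      (∀ δ > 0, δ ≤ x₀ →
        ∫⁻ y in Set.Ioo 0 δ, (volume {x ∈ Set.Ioo 0 x₀ | w x < y})⁻¹ = ⊤)) := by
  have hhalf : x₀ / 2 ∈ Set.Ioo 0 x₀ := ⟨by positivity, by linarith⟩
  have hL : ∀ δ : ℝ, 0 < δ →
      ((∫⁻ y in Set.Ioo 0 δ, (volume {x ∈ Set.Ioo 0 x₀ | w x < y})⁻¹ = ⊤) ↔
        (∫⁻ x in Set.Ioo 0 x₀, ENNReal.ofReal (min (w x) δ / x ^ 2) = ⊤)) := by
    intro δ hδ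
    rw [aux_key x₀ hx₀ w hmono hpos δ hδ]
    have hne : ENNReal.ofReal δ * (ENNReal.ofReal x₀)⁻¹ ≠ ⊤ :=
      ENNReal.mul_ne_top ENNReal.ofReal_ne_top
        (ENNReal.inv_ne_top.2 (ne_of_gt (ENNReal.ofReal_pos.2 hx₀)))
    constructor
    · intro h
      rcases ENNReal.add_eq_top.1 h with h | h
      · exact h
      · exact absurd h hne
    · intro h
      exact ENNReal.add_eq_top.2 (Or.inl h)
  refine ⟨?_, ?_, ?_⟩
  · constructor
    · rintro ⟨ε, hε, htop⟩
      exact aux_E_forall x₀ hx₀ w hmono hpos ε hε htop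
    · intro h
      exact ⟨x₀ / 2, hhalf, h _ hhalf⟩
  · constructor
    · rintro ⟨ε, hε, htop⟩
      have hall := aux_E_forall x₀ hx₀ w hmono hpos ε hε htop
      have hεh : ε / 2 ∈ Set.Ioo 0 x₀ := ⟨by linarith [hε.1], by linarith [hε.1, hε.2]⟩
      refine ⟨w (ε / 2), hpos _ hεh, ?_⟩
      rw [hL _ (hpos _ hεh)]
      have hmo : (∫⁻ x in Set.Ioo 0 (ε / 2), ENNReal.ofReal (min (w x) (w (ε / 2)) / x ^ 2))
          ≤ ∫⁻ x in Set.Ioo 0 x₀, ENNReal.ofReal (min (w x) (w (ε / 2)) / x ^ 2) :=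
        lintegral_mono_set (Set.Ioo_subset_Ioo (le_refl (0:ℝ)) (le_of_lt hεh.2))
      have hcongr : (∫⁻ x in Set.Ioo 0 (ε / 2), ENNReal.ofReal (min (w x) (w (ε / 2)) / x ^ 2))
          = ∫⁻ x in Set.Ioo 0 (ε / 2), ENNReal.ofReal (w x / x ^ 2) := by
        apply setLIntegral_congr_fun measurableSet_Ioo
        intro x hx
        have hxm : x ∈ Set.Ioo 0 x₀ := ⟨hx.1, lt_trans hx.2 hεh.2⟩
        simp only [min_eq_left (hmono hxm hεh (le_of_lt hx.2))]
      rw [hcongr, hall _ hεh] at hmo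
      exact top_le_iff.1 hmo
    · rintro ⟨δ, hδ, htop⟩
      exact ⟨x₀ / 2, hhalf, aux_M_to_E x₀ w δ (x₀ / 2) hδ hhalf ((hL δ hδ).1 htop)⟩
  · constructor
    · rintro ⟨δ, hδ, htop⟩ δ' hδ' _
      rw [hL δ' hδ']
      exact aux_M_indep x₀ w (fun x hx => (hpos x hx).le) δ δ' hδ hδ' ((hL δ hδ).1 htop)
    · intro h
      exact ⟨x₀, hx₀, h x₀ hx₀ le_rfl⟩
end

section
/- Let $\mu$ be a finite compactly supported Borel measure on $\mathbb{R}$, $\alpha \in \mathbb{R}$, $A = M_t$ multiplication by $t$ on $L^2(\mu)$, $A_\alpha = A + \alpha(\cdot,\mathbf{1})\mathbf{1}$, and let $V_\alpha : L^2(\mu) \to L^2(\mu_\alpha)$ be a unitary with $V_\alpha A_\alpha = M_s V_\alpha$ and $V_\alpha \mathbf{1} = \mathbf{1}$. Then for every $n \in \mathbb{N}$, $V_\alpha M_t^n = M_s^n V_\alpha - \alpha \sum_{k=0}^{n-1} (\cdot, t^k)_{L^2(\mu)}\, s^{n-k-1}$, and consequently $(V_\alpha t^n)(s) = s^n - \alpha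 \int_{\mathbb{R}} \frac{s^n - t^n}{s-t}\, d\mu(t)$. -/
open MeasureTheory Finset

section Aux

variable {μ : Measure ℝ} [IsFiniteMeasure μ]

private lemma aux_tmul (hbμ : ∃ s : Set ℝ, Bornology.IsBounded s ∧ μ sᶜ = 0)
    {f : ℝ → ℝ} (hf : MemLp f 2 μ) : MemLp (fun t => t * f t) 2 μ := by
  obtain ⟨s, hs, hsc⟩ := hbμ
  obtain ⟨C, hC⟩ := hs.exists_norm_le
  refine MemLp.of_le_mul (c := C) hf (aestronglyMeasurable_id.mul hf.1) ?_
  have hmem : ∀ᵐ t ∂μ, t ∈ s := by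
    rw [MeasureTheory.ae_iff]
    exact hsc
  filter_upwards [hmem] with t ht
  rw [norm_mul]
  exact mul_le_mul_of_nonneg_right (hC t ht) (norm_nonneg _)

private lemma aux_powmul (hbμ : ∃ s : Set ℝ, Bornology.IsBounded s ∧ μ sᶜ = 0)
    {f : ℝ → ℝ} (hf : MemLp f 2 μ) (n : ℕ) : MemLp (fun t => t ^ n * f t) 2 μ := by
  induction n with
  | zero => simpa using hf
  | succ n ih =>
    have := aux_tmul hbμ ih
    have heq : (fun t => t * (t ^ n * f t)) = fun t => t ^ (n + 1) * f t := by
      funext t; ring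
    rwa [heq] at this

private lemma aux_pow (hbμ : ∃ s : Set ℝ, Bornology.IsBounded s ∧ μ sᶜ = 0) (n : ℕ) :
    MemLp (fun t : ℝ => t ^ n) 2 μ := by
  have := aux_powmul hbμ (memLp_const (1 : ℝ)) n
  simpa using this

end Aux

/-- If `V_α : L²(μ) → L²(μ_α)` is unitary, intertwines `A_α = M_t + α(·,1)1` with `M_s`,
and sends `1` to `1`, then `V_α M_t^n = M_s^n V_α - α ∑_{k=0}^{n-1} (·, t^k) s^{n-k-1}`,
and consequently `(V_α t^n)(s) = s^n - α ∫ (s^n - t^n)/(s - t) dμ(t)`, where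
`(s^n - t^n)/(s-t) = ∑_{k=0}^{n-1} t^k s^{n-k-1}`. -/
theorem stmt_13 (μ ν : Measure ℝ) [IsFiniteMeasure μ] [IsFiniteMeasure ν]
    (hbμ : ∃ s : Set ℝ, Bornology.IsBounded s ∧ μ sᶜ = 0)
    (hbν : ∃ s : Set ℝ, Bornology.IsBounded s ∧ ν sᶜ = 0)
    (α : ℝ)
    (V : Lp ℝ 2 μ ≃ₗᵢ[ℝ] Lp ℝ 2 ν)
    (hinter : ∀ (f : ℝ → ℝ) (hf : MemLp f 2 μ)
      (hAf : MemLp (fun t => t * f t + α * ∫ t', f t' ∂μ) 2 μ),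
      (V (hAf.toLp _) : ℝ → ℝ) =ᵐ[ν] fun s => s * (V (hf.toLp f) : ℝ → ℝ) s)
    (h1 : MemLp (fun _ : ℝ => (1 : ℝ)) 2 μ)
    (hV1 : (V (h1.toLp _) : ℝ → ℝ) =ᵐ[ν] fun _ => (1 : ℝ)) :
    (∀ (n : ℕ) (f : ℝ → ℝ) (hf : MemLp f 2 μ)
        (htf : MemLp (fun t => t ^ n * f t) 2 μ),
      (V (htf.toLp _) : ℝ → ℝ) =ᵐ[ν] fun s =>
        s ^ n * (V (hf.toLp f) : ℝ → ℝ) s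
          - α * ∑ k ∈ Finset.range n, (∫ t, f t * t ^ k ∂μ) * s ^ (n - k - 1)) ∧
    (∀ (n : ℕ) (hn : MemLp (fun t : ℝ => t ^ n) 2 μ),
      (V (hn.toLp _) : ℝ → ℝ) =ᵐ[ν] fun s =>
        s ^ n - α * ∫ t, (∑ k ∈ Finset.range n, t ^ k * s ^ (n - k - 1)) ∂μ) := by
  have part1 : ∀ (n : ℕ) (f : ℝ → ℝ) (hf : MemLp f 2 μ)
        (htf : MemLp (fun t => t ^ n * f t) 2 μ),
      (V (htf.toLp _) : ℝ → ℝ) =ᵐ[ν] fun s =>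
        s ^ n * (V (hf.toLp f) : ℝ → ℝ) s
          - α * ∑ k ∈ Finset.range n, (∫ t, f t * t ^ k ∂μ) * s ^ (n - k - 1) := by
    intro n
    induction n with
    | zero =>
      intro f hf htf
      have heq : htf.toLp _ = hf.toLp f :=
        MemLp.toLp_congr _ _ (Filter.Eventually.of_forall fun t => by simp)
      rw [heq]
      filter_upwards with s
      simp
    | succ n ih =>
      intro f hf htf
      set g : ℝ → ℝ := fun t => t ^ n * f t with hgdef
      have hg : MemLp g 2 μ := aux_powmul hbμ hf n
      have hY : MemLp (fun t => t * g t) 2 μ := aux_tmul hbμ hg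
      set c : ℝ := ∫ t', g t' ∂μ with hcdef
      have hc : MemLp (fun _ : ℝ => α * c) 2 μ := memLp_const _
      have hAg : MemLp (fun t => t * g t + α * ∫ t', g t' ∂μ) 2 μ := by
        rw [← hcdef]; exact hY.add hc
      have key := hinter g hg hAg
      -- split hAg.toLp as hY.toLp + (α*c) • h1.toLp
      have hsplit : hAg.toLp _ = hY.toLp _ + (α * c) • h1.toLp _ := by
        rw [← MemLp.toLp_const_smul, ← MemLp.toLp_add]
        exact MemLp.toLp_congr _ _ (Filter.Eventually.of_forall fun t => by
          simp [← hcdef, Pi.add_apply, Pi.smul_apply, smul_eq_mul])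
      have hVsplit : (V (hAg.toLp _) : ℝ → ℝ) =ᵐ[ν]
          fun s => (V (hY.toLp _) : ℝ → ℝ) s + (α * c) * (V (h1.toLp _) : ℝ → ℝ) s := by
        rw [hsplit, map_add, LinearIsometryEquiv.map_smul]
        filter_upwards [Lp.coeFn_add (V (hY.toLp _)) ((α * c) • V (h1.toLp _)),
          Lp.coeFn_smul (α * c) (V (h1.toLp _))] with s h1' h2'
        rw [h1', Pi.add_apply, h2', Pi.smul_apply, smul_eq_mul]
      have hYeq : htf.toLp _ = hY.toLp _ :=
        MemLp.toLp_congr _ _ (Filter.Eventually.of_forall fun t => by ring)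
      have ihg := ih f hf hg
      rw [hYeq]
      filter_upwards [key, hVsplit, ihg, hV1] with s hk hs hih hone
      have hYval : (V (hY.toLp _) : ℝ → ℝ) s
          = s * (V (hg.toLp g) : ℝ → ℝ) s - (α * c) * 1 := by
        rw [← hone]
        have := hs
        rw [hk] at this
        linarith [this]
      have hcn : c = ∫ t, f t * t ^ n ∂μ := by
        rw [hcdef]
        exact integral_congr_ae (Filter.Eventually.of_forall fun t => by
          simp only [hgdef]; ring)
      rw [hYval, hih, hcn, Finset.sum_range_succ]
      have hsum : ∑ k ∈ Finset.range n, (∫ t, f t * t ^ k ∂μ) * s ^ (n + 1 - k - 1)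
          = s * ∑ k ∈ Finset.range n, (∫ t, f t * t ^ k ∂μ) * s ^ (n - k - 1) := by
        rw [Finset.mul_sum]
        refine Finset.sum_congr rfl fun k hk' => ?_
        rw [Finset.mem_range] at hk'
        have hpow : s ^ (n + 1 - k - 1) = s * s ^ (n - k - 1) := by
          rw [← pow_succ']
          congr 1
          omega
        rw [hpow]; ring
      rw [hsum]
      have h0 : n + 1 - n - 1 = 0 := by omega
      rw [h0, pow_zero]
      ring
  refine ⟨part1, ?_⟩
  intro n hn
  have htf : MemLp (fun t : ℝ => t ^ n * (1 : ℝ)) 2 μ := by simpa using hn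
  have heq : hn.toLp _ = htf.toLp _ :=
    MemLp.toLp_congr _ _ (Filter.Eventually.of_forall fun t => by simp)
  have key := part1 n (fun _ => 1) h1 htf
  rw [heq]
  have hint : ∀ s : ℝ, (∫ t, (∑ k ∈ Finset.range n, t ^ k * s ^ (n - k - 1)) ∂μ)
      = ∑ k ∈ Finset.range n, (∫ t, (1 : ℝ) * t ^ k ∂μ) * s ^ (n - k - 1) := by
    intro s
    rw [integral_finset_sum _ (fun k _ =>
      (((aux_pow hbμ k).integrable one_le_two).mul_const _))]
    refine Finset.sum_congr rfl fun k _ => ?_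
    rw [integral_mul_const]
    congr 1
    exact integral_congr_ae (Filter.Eventually.of_forall fun t => by simp)
  filter_upwards [key, hV1] with s hk hone
  rw [hk, hone, hint s]
  simp
end

section
/- Let $\mu$ and $\nu$ be measures on $\mathbb{R}$ with $\int (1+|x|)^{-1} d\mu(x) < \infty$ and $\int (1+|x|)^{-2} d\nu(x) < \infty$, and let $V : L^2(\mu) \to L^2(\nu)$ be a bounded operator. Suppose $f_n \in L^2(\mu) \cap L^2(\nu) \cap C^1(\mathbb{R})$ satisfy: (i) for each $n$, $(V f_n)(s) = f_n(s) - \alpha \int \frac{f_n(s) - f_n(t)}{s-t} d\mu(t)$ $\nu$-a.e.; (ii) $f_n \to f$ both $\mu$-a.e. and $\nu$-a.e.; (iii) $|f_n(x)| \le C/(1+|x|)$ uniformly in $n$; and (iv) $|f_n'(x)| \le C$ uniformly in $n$. Then $f \in L^2(\mu)$ and $(Vf)(s) = f(s) - \alpha \int \frac{f(s)-f(t)}{s-t}\, d\mu(t)$ $\nu$-a.e. -/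
open MeasureTheory Filter Topology
open scoped ENNReal NNReal

lemma quot_bound {g : ℝ → ℝ} {C : ℝ} (hC : 0 ≤ C)
    (hlip : ∀ a b : ℝ, |g a - g b| ≤ C * |a - b|)
    (hb : ∀ x, |g x| ≤ C / (1 + |x|)) (s t : ℝ) :
    |(g s - g t) / (s - t)| ≤ C * (8 + 3 * |s|) / (1 + |t|) := by
  have ht : (0:ℝ) < 1 + |t| := by positivity
  rcases eq_or_ne s t with rfl | h
  · simp only [sub_self, zero_div, abs_zero]
    positivity
  have hst : (0:ℝ) < |s - t| := abs_pos.2 (sub_ne_zero.2 h)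
  rw [abs_div, div_le_div_iff₀ hst ht]
  have habs_t : |t| ≤ |s| + |s - t| := by
    have h1 : |t| ≤ |s| + |t - s| := by
      calc |t| = |s + (t - s)| := by ring_nf
      _ ≤ |s| + |t - s| := abs_add_le _ _
    rwa [abs_sub_comm] at h1
  by_cases hcase : |s - t| ≤ 1 + 2 * |s|
  · have hnum : |g s - g t| ≤ C * |s - t| := hlip s t
    have h2 : 1 + |t| ≤ 2 + 3 * |s| := by linarith
    have h3 : |g s - g t| * (1 + |t|) ≤ C * |s - t| * (2 + 3 * |s|) :=
      mul_le_mul hnum h2 (by positivity) (by positivity)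
    nlinarith [mul_nonneg hC hst.le, mul_nonneg (mul_nonneg hC (abs_nonneg s)) hst.le]
  · push_neg at hcase
    have hnum : |g s - g t| ≤ 2 * C := by
      have h1 := hb s
      have h2 := hb t
      have hs1 : C / (1 + |s|) ≤ C := div_le_self hC (by linarith [abs_nonneg s])
      have ht1 : C / (1 + |t|) ≤ C := div_le_self hC (by linarith [abs_nonneg t])
      calc |g s - g t| ≤ |g s| + |g t| := by
            rw [sub_eq_add_neg]
            exact (abs_add_le _ _).trans (by rw [abs_neg])
        _ ≤ 2 * C := by linarith
    have hkey : 1 + |t| ≤ 5 / 2 * |s - t| := by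
      have hs2 : |s| < |s - t| / 2 := by linarith [abs_nonneg s]
      linarith [abs_nonneg s]
    have h3 : |g s - g t| * (1 + |t|) ≤ 2 * C * (5 / 2 * |s - t|) :=
      mul_le_mul hnum hkey (by positivity) (by positivity)
    nlinarith [mul_nonneg hC hst.le, mul_nonneg (mul_nonneg hC (abs_nonneg s)) hst.le]

/-- Limiting lemma for the representation formula: if a bounded operator
`V : L²(μ) → L²(ν)` satisfies `Vf(s) = f(s) - α∫ (f(s)-f(t))/(s-t) dμ(t)` on functions `f_n`
that converge a.e. to `f` with uniform bounds `|f_n(x)| ≤ C/(1+|x|)`, `|f_n'| ≤ C`, then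
`f ∈ L²(μ)` and `Vf` is given by the same formula. -/
theorem stmt_14 (μ ν : Measure ℝ)
    (hμ : Integrable (fun x => (1 + |x|)⁻¹) μ)
    (hν : Integrable (fun x => ((1 + |x|) ^ 2)⁻¹) ν)
    (α : ℝ) (V : Lp ℝ 2 μ →L[ℝ] Lp ℝ 2 ν)
    (fn : ℕ → ℝ → ℝ) (f : ℝ → ℝ) (C : ℝ)
    (hfnμ : ∀ n, MemLp (fn n) 2 μ) (hfnν : ∀ n, MemLp (fn n) 2 ν)
    (hfnC1 : ∀ n, ContDiff ℝ 1 (fn n))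
    (hrepr : ∀ n, ∀ᵐ s ∂ν,
      (V ((hfnμ n).toLp (fn n)) : ℝ → ℝ) s
        = fn n s - α * ∫ t, (fn n s - fn n t) / (s - t) ∂μ)
    (haeμ : ∀ᵐ x ∂μ, Tendsto (fun n => fn n x) atTop (𝓝 (f x)))
    (haeν : ∀ᵐ x ∂ν, Tendsto (fun n => fn n x) atTop (𝓝 (f x)))
    (hunif : ∀ n x, |fn n x| ≤ C / (1 + |x|))
    (hderiv : ∀ n x, |deriv (fn n) x| ≤ C) :
    ∃ hf : MemLp f 2 μ, ∀ᵐ s ∂ν,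
      (V (hf.toLp f) : ℝ → ℝ) s = f s - α * ∫ t, (f s - f t) / (s - t) ∂μ := by
  have hC : 0 ≤ C := by
    have h := (abs_nonneg (fn 0 0)).trans (hunif 0 0)
    simpa using h
  have hlip : ∀ n, ∀ a b : ℝ, |fn n a - fn n b| ≤ C * |a - b| := by
    intro n a b
    have hL : LipschitzWith C.toNNReal (fn n) := by
      apply lipschitzWith_of_nnnorm_deriv_le ((hfnC1 n).differentiable one_ne_zero)
      intro x
      rw [← NNReal.coe_le_coe, coe_nnnorm, Real.coe_toNNReal _ hC, Real.norm_eq_abs]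
      exact hderiv n x
    have h := hL.dist_le_mul a b
    rwa [Real.dist_eq, Real.dist_eq, Real.coe_toNNReal _ hC] at h
  have hquot : ∀ n s t, |(fn n s - fn n t) / (s - t)| ≤ C * (8 + 3 * |s|) / (1 + |t|) :=
    fun n s t => quot_bound hC (hlip n) (hunif n) s t
  have hfmμ : AEStronglyMeasurable f μ :=
    aestronglyMeasurable_of_tendsto_ae atTop
      (fun n => (hfnC1 n).continuous.aestronglyMeasurable) haeμ
  have hbf : ∀ᵐ x ∂μ, |f x| ≤ C / (1 + |x|) := by
    filter_upwards [haeμ] with x hx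
    exact le_of_tendsto hx.abs (Eventually.of_forall fun n => hunif n x)
  have hsq : ∀ D : ℝ, 0 ≤ D → Integrable (fun x : ℝ => (D / (1 + |x|)) ^ 2) μ := by
    intro D hD
    have hid := hμ.const_mul (D ^ 2)
    have hcont : Continuous fun x : ℝ => (D / (1 + |x|)) ^ 2 :=
      (continuous_const.div (continuous_const.add continuous_abs)
        (fun x => (by positivity : (1:ℝ) + |x| ≠ 0))).pow 2
    refine hid.mono' hcont.aestronglyMeasurable ?_
    filter_upwards with x
    have h1 : (0:ℝ) < 1 + |x| := by positivity
    rw [Real.norm_eq_abs, abs_of_nonneg (by positivity)]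
    calc (D / (1 + |x|)) ^ 2 = D ^ 2 / (1 + |x|) ^ 2 := by rw [div_pow]
      _ ≤ D ^ 2 / (1 + |x|) := by
          gcongr
          nlinarith [abs_nonneg x]
      _ = D ^ 2 * (1 + |x|)⁻¹ := by rw [div_eq_mul_inv]
  have hdomμ : MemLp (fun x : ℝ => C / (1 + |x|)) 2 μ :=
    (memLp_two_iff_integrable_sq
      ((continuous_const.div (continuous_const.add continuous_abs)
        (fun x => (by positivity : (1:ℝ) + |x| ≠ 0))).aestronglyMeasurable)).mpr (hsq C hC)
  have hf : MemLp f 2 μ := by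
    refine hdomμ.of_le hfmμ ?_
    filter_upwards [hbf] with x hx
    rw [Real.norm_eq_abs, Real.norm_eq_abs,
      abs_of_nonneg (show (0:ℝ) ≤ C / (1 + |x|) by positivity)]
    exact hx
  refine ⟨hf, ?_⟩
  -- L² convergence of fn to f
  have hconv : Tendsto (fun n => eLpNorm (fn n - f) 2 μ) atTop (𝓝 0) := by
    have h20 : (2:ℝ≥0∞) ≠ 0 := two_ne_zero
    have h2t : (2:ℝ≥0∞) ≠ ∞ := ENNReal.ofNat_ne_top
    have hrw : ∀ n, eLpNorm (fn n - f) 2 μ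
        = (∫⁻ x, (‖fn n x - f x‖₊ : ℝ≥0∞) ^ (2:ℝ) ∂μ) ^ (1/(2:ℝ)) := by
      intro n
      rw [eLpNorm_eq_lintegral_rpow_enorm_toReal h20 h2t]
      norm_num [Pi.sub_apply, enorm_eq_nnnorm]
    simp only [hrw]
    have hlim : Tendsto (fun n => ∫⁻ x, (‖fn n x - f x‖₊ : ℝ≥0∞) ^ (2:ℝ) ∂μ) atTop (𝓝 0) := by
      have h0 : (𝓝 (0:ℝ≥0∞)) = 𝓝 (∫⁻ _x, (0:ℝ≥0∞) ∂μ) := by rw [lintegral_zero]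
      rw [h0]
      refine tendsto_lintegral_of_dominated_convergence'
        (fun x => ENNReal.ofReal (2 * C / (1 + |x|)) ^ (2:ℝ)) (fun n => ?_) (fun n => ?_) ?_ ?_
      · exact (ENNReal.continuous_rpow_const.measurable).comp_aemeasurable
          ((hfnC1 n).continuous.aestronglyMeasurable.sub hfmμ).enorm
      · filter_upwards [hbf] with x hx
        have hb2 : ‖fn n x - f x‖ ≤ 2 * C / (1 + |x|) := by
          rw [Real.norm_eq_abs]
          have h1 := hunif n x
          calc |fn n x - f x| ≤ |fn n x| + |f x| := by
                rw [sub_eq_add_neg]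
                exact (abs_add_le _ _).trans (by rw [abs_neg])
            _ ≤ C / (1 + |x|) + C / (1 + |x|) := add_le_add h1 hx
            _ = 2 * C / (1 + |x|) := by ring
        calc (‖fn n x - f x‖₊ : ℝ≥0∞) ^ (2:ℝ)
            = ENNReal.ofReal ‖fn n x - f x‖ ^ (2:ℝ) := by rw [ofReal_norm, enorm_eq_nnnorm]
          _ ≤ ENNReal.ofReal (2 * C / (1 + |x|)) ^ (2:ℝ) :=
              ENNReal.rpow_le_rpow (ENNReal.ofReal_le_ofReal hb2) (by norm_num)
      · have heq : ∀ x : ℝ, ENNReal.ofReal (2 * C / (1 + |x|)) ^ (2:ℝ)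
            = ENNReal.ofReal ((2 * C / (1 + |x|)) ^ 2) := by
          intro x
          rw [ENNReal.ofReal_rpow_of_nonneg (by positivity) (by norm_num)]
          norm_num
        simp only [heq]
        exact (hsq (2 * C) (by linarith)).lintegral_lt_top.ne
      · filter_upwards [haeμ] with x hx
        have h1 : Tendsto (fun n => fn n x - f x) atTop (𝓝 0) := by
          simpa using hx.sub (tendsto_const_nhds : Tendsto (fun _ : ℕ => f x) atTop (𝓝 (f x)))
        have h2 : Tendsto (fun n => ‖fn n x - f x‖) atTop (𝓝 0) := by
          simpa using h1.norm
        have h3 := (ENNReal.continuous_ofReal.tendsto 0).comp h2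
        have h4 := ((ENNReal.continuous_rpow_const (y := (2:ℝ))).tendsto _).comp h3
        simp only [Function.comp_def, ENNReal.ofReal_zero] at h4
        rw [ENNReal.zero_rpow_of_pos (by norm_num : (0:ℝ) < 2)] at h4
        refine h4.congr fun n => ?_
        rw [ofReal_norm, enorm_eq_nnnorm]
    have h5 := ((ENNReal.continuous_rpow_const (y := (1/(2:ℝ)))).tendsto 0).comp hlim
    simpa [Function.comp_def, ENNReal.zero_rpow_of_pos] using h5
  haveI : Fact ((1:ℝ≥0∞) ≤ 2) := ⟨one_le_two⟩
  have hLp : Tendsto (fun n => (hfnμ n).toLp (fn n)) atTop (𝓝 (hf.toLp f)) :=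
    (Lp.tendsto_Lp_iff_tendsto_eLpNorm'' _ hfnμ f hf).mpr hconv
  have hVconv : Tendsto (fun n => V ((hfnμ n).toLp (fn n))) atTop (𝓝 (V (hf.toLp f))) :=
    (V.continuous.tendsto _).comp hLp
  have htm := tendstoInMeasure_of_tendsto_Lp hVconv
  obtain ⟨ns, hns, haeV⟩ := htm.exists_seq_tendsto_ae
  have hrepr' : ∀ᵐ s ∂ν, ∀ n, (V ((hfnμ n).toLp (fn n)) : ℝ → ℝ) s
      = fn n s - α * ∫ t, (fn n s - fn n t) / (s - t) ∂μ := ae_all_iff.2 hrepr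
  filter_upwards [haeV, hrepr', haeν] with s hVs hRs hs
  have hbint : Integrable (fun t : ℝ => C * (8 + 3 * |s|) / (1 + |t|)) μ := by
    simpa [div_eq_mul_inv] using hμ.const_mul (C * (8 + 3 * |s|))
  have hI : Tendsto (fun n => ∫ t, (fn n s - fn n t) / (s - t) ∂μ) atTop
      (𝓝 (∫ t, (f s - f t) / (s - t) ∂μ)) := by
    refine tendsto_integral_of_dominated_convergence _ (fun n => ?_) hbint (fun n => ?_) ?_
    · exact ((measurable_const.sub (hfnC1 n).continuous.measurable).div
        (measurable_const.sub measurable_id)).aestronglyMeasurable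
    · filter_upwards with t
      rw [Real.norm_eq_abs]
      exact hquot n s t
    · filter_upwards [haeμ] with t ht
      exact (hs.sub ht).div_const (s - t)
  have h1 : Tendsto (fun k => fn (ns k) s - α * ∫ t, (fn (ns k) s - fn (ns k) t) / (s - t) ∂μ)
      atTop (𝓝 (f s - α * ∫ t, (f s - f t) / (s - t) ∂μ)) :=
    (hs.comp hns.tendsto_atTop).sub (tendsto_const_nhds.mul (hI.comp hns.tendsto_atTop))
  exact tendsto_nhds_unique (hVs.congr fun k => hRs (ns k)) h1
end
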